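/- Let K be a field of characteristic zero and let R = K[x, y_1,…,y_n]. Fix 1 ≤ k ≤ n and let D = ∂_x + Σ_{i=1}^{k} (a(x)·y_i + b_i(x))·∂_i + Σ_{j=k+1}^{n} b_j(x)·∂_j be the K-derivation of R with a(x), b_1(x),…,b_n(x) ∈ K[x]. Then Im D = D(R) is a Mathieu–Zhao space of R if and only if a(x) is a constant, i.e., a(x) ∈ K. -/

import Mathlib

open MvPolynomial

/-- A `K`-subspace `M` of `R` is a Mathieu–Zhao space if for all `a, b ∈ R` such that
`a ^ m ∈ M` for all `m ≥ 1`, there exists `N` such that `b * a ^ m ∈ M` for all `m ≥ N`. -/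
def IsMathieuZhao (K : Type*) {R : Type*} [Field K] [CommRing R] [Algebra K R]
    (M : Submodule K R) : Prop :=
  ∀ a b : R, (∀ m : ℕ, 1 ≤ m → a ^ m ∈ M) →
    ∃ N : ℕ, ∀ m : ℕ, N ≤ m → b * a ^ m ∈ M

/-- A `K`-derivation `D` of `R` is simple if the only ideals `I` of `R` with `D(I) ⊆ I`
are `0` and `R`. -/
def Derivation.IsSimple {K R : Type*} [CommRing K] [CommRing R] [Algebra K R]
    (D : Derivation K R R) : Prop :=
  ∀ I : Ideal R, (∀ a ∈ I, D a ∈ I) → I = ⊥ ∨ I = ⊤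

noncomputable section

namespace MZ3

variable {K : Type*} [Field K] {n : ℕ}

/-- The values of the derivation on the variables. -/
def dval (k : ℕ) (a : Polynomial K) (b : Fin n → Polynomial K) :
    Option (Fin n) → MvPolynomial (Option (Fin n)) K
  | none => 1
  | some i =>
    if (i : ℕ) < k then
      Polynomial.aeval (X none) a * X (some i) + Polynomial.aeval (X none) (b i)
    else Polynomial.aeval (X none) (b i)

variable {k : ℕ} {a : Polynomial K} {b : Fin n → Polynomial K}
  {D : Derivation K (MvPolynomial (Option (Fin n)) K) (MvPolynomial (Option (Fin n)) K)}

lemma D_eq (hDx : D (X none) = 1)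
    (hDy : ∀ i : Fin n, D (X (some i)) = dval k a b (some i)) :
    D = mkDerivation K (dval k a b) := by
  apply derivation_ext
  intro v
  rw [mkDerivation_X]
  cases v with
  | none => exact hDx
  | some i => exact hDy i

lemma D_monomial (hDx : D (X none) = 1)
    (hDy : ∀ i : Fin n, D (X (some i)) = dval k a b (some i))
    (σ : Option (Fin n) →₀ ℕ) (c : K) :
    D (monomial σ c) =
      ∑ v : Option (Fin n),
        monomial (σ - Finsupp.single v 1) (c * (σ v : K)) * dval k a b v := by
  rw [D_eq hDx hDy, mkDerivation_monomial,
    Finsupp.sum_fintype _ _ (fun v => by simp), Finset.smul_sum]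
  refine Finset.sum_congr rfl fun v _ => ?_
  rw [smul_eq_mul (α := MvPolynomial (Option (Fin n)) K), ← smul_mul_assoc,
    MvPolynomial.smul_monomial, smul_eq_mul]

/-- Solving the ODE `g' + κ g = x^m` in `K[x]`. -/
lemma ode [CharZero K] (κ : K) (m : ℕ) : ∃ g : Polynomial K,
    Polynomial.derivative g + Polynomial.C κ * g = Polynomial.X ^ m := by
  rcases eq_or_ne κ 0 with rfl | hκ
  · refine ⟨Polynomial.C ((m + 1 : K))⁻¹ * Polynomial.X ^ (m + 1), ?_⟩
    have h1 : ((m : K) + 1) ≠ 0 := Nat.cast_add_one_ne_zero m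
    rw [Polynomial.derivative_C_mul, Polynomial.derivative_X_pow]
    push_cast
    rw [map_zero, zero_mul, add_zero, ← mul_assoc, ← Polynomial.C_mul,
      inv_mul_cancel₀ h1, Polynomial.C_1, one_mul]
  · induction m with
    | zero =>
      refine ⟨Polynomial.C κ⁻¹, ?_⟩
      rw [Polynomial.derivative_C, ← Polynomial.C_mul, mul_inv_cancel₀ hκ]
      simp
    | succ m ih =>
      obtain ⟨g₀, hg₀⟩ := ih
      refine ⟨Polynomial.C κ⁻¹ * (Polynomial.X ^ (m + 1) -
        Polynomial.C ((m : K) + 1) * g₀), ?_⟩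
      have hP : Polynomial.derivative (Polynomial.X ^ (m + 1) -
          Polynomial.C ((m : K) + 1) * g₀) =
          Polynomial.C ((m : K) + 1) * (Polynomial.C κ * g₀) := by
        rw [Polynomial.derivative_sub, Polynomial.derivative_X_pow,
          Polynomial.derivative_C_mul]
        have : Polynomial.derivative g₀ = Polynomial.X ^ m - Polynomial.C κ * g₀ := by
          rw [← hg₀]; ring
        rw [this]
        push_cast
        ring
      have h1 : Polynomial.C κ * Polynomial.C κ⁻¹ = (1 : Polynomial K) := by
        rw [← Polynomial.C_mul, mul_inv_cancel₀ hκ, Polynomial.C_1]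
      rw [Polynomial.derivative_C_mul, hP]
      push_cast
      linear_combination (Polynomial.X ^ (m + 1) : Polynomial K) * h1

lemma A0 (τ : Option (Fin n) →₀ ℕ)
    (h : ∀ m' : ℕ, monomial (Finsupp.single none m' + τ) (1 : K) ∈
      LinearMap.range D.toLinearMap)
    (w : Polynomial K) :
    Polynomial.aeval (X none) w * monomial τ 1 ∈ LinearMap.range D.toLinearMap := by
  induction w using Polynomial.induction_on' with
  | add p q hp hq => rw [map_add, add_mul]; exact add_mem hp hq
  | monomial u c =>
    have : (Polynomial.aeval (X none) (Polynomial.monomial u c) : MvPolynomial (Option (Fin n)) K)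
        * monomial τ 1 = c • monomial (Finsupp.single none u + τ) (1 : K) := by
      rw [Polynomial.aeval_monomial, MvPolynomial.X_pow_eq_monomial]
      rw [MvPolynomial.algebraMap_eq, mul_assoc, MvPolynomial.monomial_mul,
        MvPolynomial.C_mul_monomial, MvPolynomial.smul_monomial]
      simp
    rw [this]
    exact Submodule.smul_mem _ _ (h u)


lemma coreA [CharZero K] (hDx : D (X none) = 1)
    (hDy : ∀ i : Fin n, D (X (some i)) = dval k a b (some i))
    (c : K) (hc : a = Polynomial.C c) (σ : Option (Fin n) →₀ ℕ)
    (hIH : ∀ σ' : Option (Fin n) →₀ ℕ,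
      (∑ i : Fin n, σ' (some i)) < (∑ i : Fin n, σ (some i)) →
      monomial σ' (1 : K) ∈ LinearMap.range D.toLinearMap) :
    monomial σ (1 : K) ∈ LinearMap.range D.toLinearMap := by
  classical
  set τ : Option (Fin n) →₀ ℕ := σ.erase none with hτdef
  have hτnone : τ none = 0 := Finsupp.erase_same
  have hτsome : ∀ i : Fin n, τ (some i) = σ (some i) := fun i =>
    Finsupp.erase_ne (by simp)
  set m : ℕ := σ none with hmdef
  set s : ℕ := ∑ i : Fin n, if (i : ℕ) < k then σ (some i) else 0 with hsdef
  obtain ⟨g, hg⟩ := ode ((s : K) * c) m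
  set G : MvPolynomial (Option (Fin n)) K := Polynomial.aeval (X none) g with hGdef
  have hDG : D G = Polynomial.aeval (X none) (Polynomial.derivative g) := by
    rw [hGdef, Derivation.comp_aeval_eq, hDx, smul_eq_mul, mul_one]
  have hDYτ : D (monomial τ (1 : K)) = (s : K) • (C c * monomial τ 1) +
      ∑ i : Fin n, (τ (some i) : K) •
        (Polynomial.aeval (X none) (b i) * monomial (τ - Finsupp.single (some i) 1) 1) := by
    rw [D_monomial hDx hDy τ 1, univ_option, Finset.sum_insertNone]
    have h0 : monomial (τ - Finsupp.single none 1) ((1 : K) * (τ none : K)) *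
        dval k a b none = 0 := by
      rw [hτnone]; simp
    rw [h0, zero_add]
    have hterm : ∀ i : Fin n,
        monomial (τ - Finsupp.single (some i) 1) ((1 : K) * (τ (some i) : K)) *
          dval k a b (some i)
        = (if (i : ℕ) < k then (τ (some i) : K) • (C c * monomial τ 1) else 0)
          + (τ (some i) : K) • (Polynomial.aeval (X none) (b i) *
              monomial (τ - Finsupp.single (some i) 1) 1) := by
      intro i
      by_cases hτi : τ (some i) = 0
      · rw [hτi]; simp
      · have hle : Finsupp.single (some i) 1 ≤ τ := by
          rw [Finsupp.single_le_iff]; omega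
        have hXmul : monomial (τ - Finsupp.single (some i) 1) (1 : K) * X (some i) =
            monomial τ 1 := by
          rw [X, monomial_mul, mul_one, tsub_add_cancel_of_le hle]
        have hsm : monomial (τ - Finsupp.single (some i) 1) ((1 : K) * (τ (some i) : K)) =
            (τ (some i) : K) • monomial (τ - Finsupp.single (some i) 1) (1 : K) := by
          rw [MvPolynomial.smul_monomial, one_mul, smul_eq_mul, mul_one]
        have hA : (Polynomial.aeval (X none) a : MvPolynomial (Option (Fin n)) K) = C c := by
          rw [hc, Polynomial.aeval_C, MvPolynomial.algebraMap_eq]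
        show _ * dval k a b (some i) = _
        rw [dval]
        by_cases hik : (i : ℕ) < k
        · rw [if_pos hik, if_pos hik, hsm, smul_mul_assoc, mul_add, smul_add]
          congr 1
          · congr 1
            rw [hA, mul_comm (C c) (X (some i)), ← mul_assoc, hXmul, mul_comm]
          · congr 1
            rw [mul_comm]
        · rw [if_neg hik, if_neg hik, zero_add, hsm, smul_mul_assoc]
          congr 1
          rw [mul_comm]
    rw [Finset.sum_congr rfl (fun i _ => hterm i), Finset.sum_add_distrib]
    congr 1
    have : ∀ i : Fin n, (if (i : ℕ) < k then (τ (some i) : K) • (C c * monomial τ 1) else 0)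
        = (if (i : ℕ) < k then (τ (some i) : K) else 0) • (C c * monomial τ (1 : K)) := by
      intro i; split <;> simp
    rw [Finset.sum_congr rfl (fun i _ => this i), ← Finset.sum_smul]
    congr 1
    rw [hsdef]
    push_cast
    exact Finset.sum_congr rfl fun i _ => by rw [hτsome i]
  have hσsplit : Finsupp.single none m + τ = σ := Finsupp.single_add_erase none σ
  have key1 : Polynomial.aeval (X none) (Polynomial.derivative g) * monomial τ 1 +
      G * ((s : K) • (C c * monomial τ 1)) = monomial σ 1 := by
    have h2 : G * ((s : K) • (C c * monomial τ 1)) =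
        (C ((s : K) * c) * G) * monomial τ 1 := by
      rw [MvPolynomial.smul_eq_C_mul, map_mul]
      ring
    rw [h2, ← add_mul]
    have h3 : (C ((s : K) * c) : MvPolynomial (Option (Fin n)) K) =
        Polynomial.aeval (X none) (Polynomial.C ((s : K) * c)) := by
      rw [Polynomial.aeval_C, MvPolynomial.algebraMap_eq]
    rw [h3, hGdef, ← map_mul, ← map_add, hg, Polynomial.aeval_X_pow,
      X_pow_eq_monomial, monomial_mul, mul_one, hσsplit]
  have hq : D (G * monomial τ 1) = monomial σ 1 +
      ∑ i : Fin n, (τ (some i) : K) •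
        (Polynomial.aeval (X none) (b i * g) * monomial (τ - Finsupp.single (some i) 1) 1) := by
    rw [D.leibniz, hDYτ, hDG, smul_eq_mul, smul_eq_mul, mul_add, ← key1]
    have h4 : G * ∑ i : Fin n, (τ (some i) : K) •
        (Polynomial.aeval (X none) (b i) * monomial (τ - Finsupp.single (some i) 1) 1) =
        ∑ i : Fin n, (τ (some i) : K) •
        (Polynomial.aeval (X none) (b i * g) * monomial (τ - Finsupp.single (some i) 1) 1) := by
      rw [Finset.mul_sum]
      refine Finset.sum_congr rfl fun i _ => ?_
      rw [mul_smul_comm, map_mul]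
      congr 1
      ring
    rw [h4]
    ring
  have hmem : ∀ i : Fin n, (τ (some i) : K) •
      (Polynomial.aeval (X none) (b i * g) * monomial (τ - Finsupp.single (some i) 1) 1) ∈
      LinearMap.range D.toLinearMap := by
    intro i
    by_cases hτi : τ (some i) = 0
    · rw [hτi]; simp
    · refine Submodule.smul_mem _ _ (A0 _ ?_ _)
      intro m'
      refine hIH _ ?_
      have hσi : σ (some i) ≠ 0 := by rwa [hτsome] at hτi
      refine Finset.sum_lt_sum (fun i' _ => ?_) ⟨i, Finset.mem_univ i, ?_⟩
      · simp [Finsupp.single_apply, Finsupp.tsub_apply, hτsome]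
      · simp [Finsupp.single_apply, Finsupp.tsub_apply, hτsome]
        omega
  have hfinal : monomial σ (1 : K) = D (G * monomial τ 1) -
      ∑ i : Fin n, (τ (some i) : K) •
        (Polynomial.aeval (X none) (b i * g) * monomial (τ - Finsupp.single (some i) 1) 1) := by
    rw [hq]; ring
  rw [hfinal]
  exact Submodule.sub_mem _ ⟨G * monomial τ 1, rfl⟩ (Submodule.sum_mem _ fun i _ => hmem i)


lemma mono_mem [CharZero K] (hDx : D (X none) = 1)
    (hDy : ∀ i : Fin n, D (X (some i)) = dval k a b (some i))
    (c : K) (hc : a = Polynomial.C c) :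
    ∀ (N : ℕ) (σ : Option (Fin n) →₀ ℕ), (∑ i : Fin n, σ (some i)) ≤ N →
      monomial σ (1 : K) ∈ LinearMap.range D.toLinearMap := by
  intro N
  induction N with
  | zero =>
    intro σ hσ
    exact coreA hDx hDy c hc σ (fun σ' h => absurd h (by omega))
  | succ N ih =>
    intro σ hσ
    exact coreA hDx hDy c hc σ (fun σ' h => ih σ' (by omega))

lemma partA [CharZero K] (hDx : D (X none) = 1)
    (hDy : ∀ i : Fin n, D (X (some i)) = dval k a b (some i))
    (c : K) (hc : a = Polynomial.C c) :
    IsMathieuZhao K (LinearMap.range D.toLinearMap) := by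
  have htop : ∀ p : MvPolynomial (Option (Fin n)) K, p ∈ LinearMap.range D.toLinearMap := by
    intro p
    induction p using MvPolynomial.induction_on' with
    | monomial σ c' =>
      have h1 : monomial σ c' = c' • monomial σ (1 : K) := by
        rw [MvPolynomial.smul_monomial, smul_eq_mul, mul_one]
      rw [h1]
      exact Submodule.smul_mem _ _ (mono_mem hDx hDy c hc _ σ le_rfl)
    | add p q hp hq => exact add_mem hp hq
  intro u v _
  exact ⟨0, fun m _ => htop _⟩

def sW (k : ℕ) (β : Fin n →₀ ℕ) : ℕ := ∑ i : Fin n, if (i : ℕ) < k then β i else 0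

noncomputable def lam (a : Polynomial K) (b : Fin n → Polynomial K) (k : ℕ) (i0 : Fin n)
    (β : Fin n →₀ ℕ) (m : ℕ) : K :=
  if _h1 : a.natDegree = 0 then 0
  else if _h2 : β i0 = 0 then 0
  else if _h3 : m < a.natDegree then (if β = Finsupp.single i0 1 ∧ m = 0 then 1 else 0)
  else
    -((sW k β : K) * a.leadingCoeff)⁻¹ *
      ( ((m - a.natDegree : ℕ) : K) * lam a b k i0 β (m - a.natDegree - 1)
        + (sW k β : K) * ∑ l ∈ Finset.range a.natDegree,
            a.coeff l * lam a b k i0 β (m - a.natDegree + min l (a.natDegree - 1))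
        + ∑ i : Fin n, (if _h4 : β i = 0 then 0 else
            (β i : K) * ∑ l ∈ Finset.range ((b i).natDegree + 1),
              (b i).coeff l * lam a b k i0 (β - Finsupp.single i 1) (m - a.natDegree + l)) )
termination_by ((∑ i : Fin n, β i), m)
decreasing_by
  · apply Prod.Lex.right; omega
  · apply Prod.Lex.right
    have := Nat.min_le_right l (a.natDegree - 1)
    omega
  · apply Prod.Lex.left
    refine Finset.sum_lt_sum (fun i' _ => ?_) ⟨i, Finset.mem_univ i, ?_⟩
    · simp only [Finsupp.tsub_apply, Finsupp.single_apply]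
      split <;> omega
    · simp [Finsupp.tsub_apply, Finsupp.single_apply]
      omega

variable {i0 : Fin n}

lemma lam_vanish (h : β i0 = 0) : lam a b k i0 β m = 0 := by
  rw [lam]
  simp [h]

lemma lam_init (he : a.natDegree ≠ 0) :
    lam a b k i0 (Finsupp.single i0 1) 0 = 1 := by
  rw [lam]
  simp [he, Nat.pos_of_ne_zero he]

lemma lam_key [CharZero K] (he : a.natDegree ≠ 0) (hk0 : (i0 : ℕ) < k) (β : Fin n →₀ ℕ) (j : ℕ) :
    (j : K) * lam a b k i0 β (j - 1)
    + (sW k β : K) * ∑ l ∈ Finset.range (a.natDegree + 1),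
        a.coeff l * lam a b k i0 β (j + l)
    + ∑ i : Fin n, (β i : K) * ∑ l ∈ Finset.range ((b i).natDegree + 1),
        (b i).coeff l * lam a b k i0 (β - Finsupp.single i 1) (j + l) = 0 := by
  by_cases h0 : β i0 = 0
  · have hz' : ∀ (i : Fin n) (m : ℕ), lam a b k i0 (β - Finsupp.single i 1) m = 0 := by
      intro i m
      apply lam_vanish
      simp only [Finsupp.tsub_apply]
      omega
    simp [lam_vanish h0, hz']
  · have hβ1 : 1 ≤ β i0 := Nat.pos_of_ne_zero h0
    have hsW : sW k β ≠ 0 := by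
      have : β i0 ≤ sW k β := by
        rw [sW]
        refine Finset.single_le_sum (f := fun i : Fin n => if (i : ℕ) < k then β i else 0)
          (fun i _ => by positivity) (Finset.mem_univ i0) |>.trans_eq' ?_
        rw [if_pos hk0]
      omega
    have hane : a ≠ 0 := fun h => he (by simp [h])
    have hxne : ((sW k β : K) * a.leadingCoeff) ≠ 0 :=
      mul_ne_zero (Nat.cast_ne_zero.mpr hsW) (Polynomial.leadingCoeff_ne_zero.mpr hane)
    have hm : ¬ (j + a.natDegree < a.natDegree) := by omega
    have hL : ((sW k β : K) * a.leadingCoeff) * lam a b k i0 β (j + a.natDegree)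
        = -( (j : K) * lam a b k i0 β (j - 1)
             + (sW k β : K) * ∑ l ∈ Finset.range a.natDegree,
                 a.coeff l * lam a b k i0 β (j + l)
             + ∑ i : Fin n, (β i : K) * ∑ l ∈ Finset.range ((b i).natDegree + 1),
                 (b i).coeff l * lam a b k i0 (β - Finsupp.single i 1) (j + l) ) := by
      conv_lhs => rw [lam]
      rw [dif_neg he, dif_neg h0, dif_neg hm, Nat.add_sub_cancel]
      have e1 : ∑ l ∈ Finset.range a.natDegree,
          a.coeff l * lam a b k i0 β (j + min l (a.natDegree - 1)) =
          ∑ l ∈ Finset.range a.natDegree, a.coeff l * lam a b k i0 β (j + l) := by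
        refine Finset.sum_congr rfl fun l hl => ?_
        rw [Finset.mem_range] at hl
        rw [min_eq_left (by omega)]
      have e2 : (∑ i : Fin n, (if _h4 : β i = 0 then 0 else
            (β i : K) * ∑ l ∈ Finset.range ((b i).natDegree + 1),
              (b i).coeff l * lam a b k i0 (β - Finsupp.single i 1) (j + l)))
          = ∑ i : Fin n, (β i : K) * ∑ l ∈ Finset.range ((b i).natDegree + 1),
              (b i).coeff l * lam a b k i0 (β - Finsupp.single i 1) (j + l) := by
        refine Finset.sum_congr rfl fun i _ => ?_
        by_cases hb : β i = 0
        · rw [dif_pos hb, hb]; simp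
        · rw [dif_neg hb]
      rw [e1, e2, neg_mul, mul_neg, ← mul_assoc, mul_inv_cancel₀ hxne, one_mul]
    rw [Finset.sum_range_succ, Polynomial.coeff_natDegree]
    linear_combination hL

noncomputable def down (σ : Option (Fin n) →₀ ℕ) : Fin n →₀ ℕ :=
  Finsupp.equivFunOnFinite.symm (fun i => σ (some i))

@[simp] lemma down_apply (σ : Option (Fin n) →₀ ℕ) (i : Fin n) : down σ i = σ (some i) := rfl

noncomputable def mu (a : Polynomial K) (b : Fin n → Polynomial K) (k : ℕ) (i0 : Fin n)
    (σ : Option (Fin n) →₀ ℕ) : K := lam a b k i0 (down σ) (σ none)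

noncomputable def LamF (a : Polynomial K) (b : Fin n → Polynomial K) (k : ℕ) (i0 : Fin n)
    (p : MvPolynomial (Option (Fin n)) K) : K :=
  Finsupp.sum (AddMonoidAlgebra.coeff p) fun σ t => mu a b k i0 σ * t

lemma LamF_zero : LamF a b k i0 (0 : MvPolynomial (Option (Fin n)) K) = 0 :=
  Finsupp.sum_zero_index

lemma LamF_add (p q : MvPolynomial (Option (Fin n)) K) :
    LamF a b k i0 (p + q) = LamF a b k i0 p + LamF a b k i0 q :=
  Finsupp.sum_add_index' (fun σ => mul_zero _) (fun σ t1 t2 => mul_add _ _ _)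

lemma LamF_monomial (σ : Option (Fin n) →₀ ℕ) (c : K) :
    LamF a b k i0 (monomial σ c) = mu a b k i0 σ * c := by
  have h : AddMonoidAlgebra.coeff (monomial σ c : MvPolynomial (Option (Fin n)) K) =
      Finsupp.single σ c := rfl
  rw [LamF, h]
  exact Finsupp.sum_single_index (mul_zero _)

lemma LamF_sum {ι : Type*} (s : Finset ι) (f : ι → MvPolynomial (Option (Fin n)) K) :
    LamF a b k i0 (∑ x ∈ s, f x) = ∑ x ∈ s, LamF a b k i0 (f x) := by
  classical
  induction s using Finset.induction_on with
  | empty => simp [LamF_zero]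
  | insert x s hx ih => rw [Finset.sum_insert hx, Finset.sum_insert hx, LamF_add, ih]

lemma Lmulaeval (τ : Option (Fin n) →₀ ℕ) (r : K) (q : Polynomial K) :
    LamF a b k i0 (monomial τ r * Polynomial.aeval (X none) q) =
      ∑ l ∈ Finset.range (q.natDegree + 1),
        q.coeff l * (r * mu a b k i0 (τ + Finsupp.single none l)) := by
  conv_lhs => rw [Polynomial.as_sum_range' q (q.natDegree + 1) (Nat.lt_succ_self _)]
  rw [map_sum, Finset.mul_sum, LamF_sum]
  refine Finset.sum_congr rfl fun l _ => ?_
  rw [Polynomial.aeval_monomial, MvPolynomial.algebraMap_eq, X_pow_eq_monomial,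
    C_mul_monomial, monomial_mul, LamF_monomial]
  ring


lemma LamF_D [CharZero K] (he : a.natDegree ≠ 0) (hk0 : (i0 : ℕ) < k)
    (hDx : D (X none) = 1)
    (hDy : ∀ i : Fin n, D (X (some i)) = dval k a b (some i))
    (p : MvPolynomial (Option (Fin n)) K) :
    LamF a b k i0 (D p) = 0 := by
  induction p using MvPolynomial.induction_on' with
  | add p q hp hq => rw [map_add, LamF_add, hp, hq, add_zero]
  | monomial σ c =>
    rw [D_monomial hDx hDy, LamF_sum, univ_option, Finset.sum_insertNone]
    set β : Fin n →₀ ℕ := down σ with hβ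
    set j : ℕ := σ none with hj
    have h_none : LamF a b k i0
        (monomial (σ - Finsupp.single none 1) (c * (σ none : K)) * dval k a b none) =
        c * ((j : K) * lam a b k i0 β (j - 1)) := by
      show LamF a b k i0 (monomial (σ - Finsupp.single none 1) (c * (σ none : K)) * 1) = _
      rw [mul_one, LamF_monomial]
      have hd : down (σ - Finsupp.single none 1) = β := by
        ext i; simp [hβ, Finsupp.tsub_apply, Finsupp.single_apply]
      have hnone : ((σ - Finsupp.single none 1 : Option (Fin n) →₀ ℕ)) none = j - 1 := by
        simp [hj, Finsupp.tsub_apply]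
      rw [mu, hd, hnone]
      ring
    have h_some : ∀ i : Fin n, LamF a b k i0
        (monomial (σ - Finsupp.single (some i) 1) (c * (σ (some i) : K)) * dval k a b (some i)) =
        c * ((if (i : ℕ) < k then (β i : K) * ∑ l ∈ Finset.range (a.natDegree + 1),
                a.coeff l * lam a b k i0 β (j + l) else 0)
            + (β i : K) * ∑ l ∈ Finset.range ((b i).natDegree + 1),
                (b i).coeff l * lam a b k i0 (β - Finsupp.single i 1) (j + l)) := by
      intro i
      have hβi : β i = σ (some i) := rfl
      by_cases hσi : σ (some i) = 0
      · have hbz : β i = 0 := by rw [hβi, hσi]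
        rw [hσi, hbz]
        simp [LamF_zero]
      · have hle : Finsupp.single (some i) 1 ≤ σ := by rw [Finsupp.single_le_iff]; omega
        have hback : σ - Finsupp.single (some i) 1 + Finsupp.single (some i) 1 = σ :=
          tsub_add_cancel_of_le hle
        have hdown1 : ∀ l : ℕ, mu a b k i0 (σ + Finsupp.single none l) =
            lam a b k i0 β (j + l) := by
          intro l
          rw [mu]
          congr 1
          · ext i'; simp [hβ, Finsupp.single_apply]
          · simp [hj]
        have hdown2 : ∀ l : ℕ,
            mu a b k i0 ((σ - Finsupp.single (some i) 1) + Finsupp.single none l)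
            = lam a b k i0 (β - Finsupp.single i 1) (j + l) := by
          intro l
          rw [mu]
          congr 1
          · ext i'
            simp only [down_apply, Finsupp.add_apply, Finsupp.tsub_apply,
              Finsupp.single_apply]
            by_cases h : i = i' <;> simp [h, hβ]
          · simp [hj, Finsupp.tsub_apply]
        show LamF a b k i0 (monomial (σ - Finsupp.single (some i) 1) (c * (σ (some i) : K)) *
          (if (i : ℕ) < k then
            Polynomial.aeval (X none) a * X (some i) + Polynomial.aeval (X none) (b i)
          else Polynomial.aeval (X none) (b i))) = _
        have eB : ∑ l ∈ Finset.range ((b i).natDegree + 1), (b i).coeff l *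
              ((c * (σ (some i) : K)) *
                mu a b k i0 ((σ - Finsupp.single (some i) 1) + Finsupp.single none l)) =
            ∑ l ∈ Finset.range ((b i).natDegree + 1), (b i).coeff l *
              ((c * (σ (some i) : K)) * lam a b k i0 (β - Finsupp.single i 1) (j + l)) :=
          Finset.sum_congr rfl fun l _ => by rw [hdown2]
        have eRB : c * ((σ (some i) : K) * ∑ l ∈ Finset.range ((b i).natDegree + 1),
              (b i).coeff l * lam a b k i0 (β - Finsupp.single i 1) (j + l)) =
            ∑ l ∈ Finset.range ((b i).natDegree + 1), (b i).coeff l *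
              ((c * (σ (some i) : K)) * lam a b k i0 (β - Finsupp.single i 1) (j + l)) := by
          rw [Finset.mul_sum, Finset.mul_sum]
          exact Finset.sum_congr rfl fun l _ => by ring
        by_cases hik : (i : ℕ) < k
        · rw [if_pos hik, if_pos hik]
          have hXA : monomial (σ - Finsupp.single (some i) 1) (c * (σ (some i) : K)) *
              (Polynomial.aeval (X none) a * X (some i)) =
              monomial σ (c * (σ (some i) : K)) * Polynomial.aeval (X none) a := by
            have hx : monomial (σ - Finsupp.single (some i) 1) (c * (σ (some i) : K)) *
                X (some i) = monomial σ (c * (σ (some i) : K)) := by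
              rw [X, monomial_mul, mul_one, hback]
            rw [mul_comm (Polynomial.aeval (X none) a) (X (some i)), ← mul_assoc, hx]
          rw [mul_add, LamF_add, hXA, Lmulaeval, Lmulaeval]
          have eA : ∑ l ∈ Finset.range (a.natDegree + 1), a.coeff l *
                ((c * (σ (some i) : K)) * mu a b k i0 (σ + Finsupp.single none l)) =
              ∑ l ∈ Finset.range (a.natDegree + 1), a.coeff l *
                ((c * (σ (some i) : K)) * lam a b k i0 β (j + l)) :=
            Finset.sum_congr rfl fun l _ => by rw [hdown1]
          have eRA : c * ((σ (some i) : K) * ∑ l ∈ Finset.range (a.natDegree + 1),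
                a.coeff l * lam a b k i0 β (j + l)) =
              ∑ l ∈ Finset.range (a.natDegree + 1), a.coeff l *
                ((c * (σ (some i) : K)) * lam a b k i0 β (j + l)) := by
            rw [Finset.mul_sum, Finset.mul_sum]
            exact Finset.sum_congr rfl fun l _ => by ring
          rw [eA, eB, hβi, mul_add, eRA, eRB]
        · rw [if_neg hik, if_neg hik]
          rw [Lmulaeval, eB, hβi, mul_add, mul_zero, zero_add, eRB]
    rw [h_none, Finset.sum_congr rfl (fun i _ => h_some i), ← Finset.mul_sum,
      Finset.sum_add_distrib]
    have hifa : (∑ i : Fin n, (if (i : ℕ) < k then (β i : K) * ∑ l ∈ Finset.range (a.natDegree + 1),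
            a.coeff l * lam a b k i0 β (j + l) else 0)) =
        (sW k β : K) * ∑ l ∈ Finset.range (a.natDegree + 1),
            a.coeff l * lam a b k i0 β (j + l) := by
      rw [sW]
      push_cast
      rw [Finset.sum_mul]
      exact Finset.sum_congr rfl fun i _ => by rw [ite_mul, zero_mul]
    rw [hifa]
    linear_combination c * lam_key (a := a) (b := b) he hk0 β j

lemma lam_e1_rec [CharZero K] (he : a.natDegree ≠ 0) (hk0 : (i0 : ℕ) < k) (j : ℕ) :
    (j : K) * lam a b k i0 (Finsupp.single i0 1) (j - 1)
    + ∑ l ∈ Finset.range (a.natDegree + 1),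
        a.coeff l * lam a b k i0 (Finsupp.single i0 1) (j + l) = 0 := by
  have h := lam_key (a := a) (b := b) he hk0 (Finsupp.single i0 1) j
  have hsW : sW k (Finsupp.single i0 1) = 1 := by
    rw [sW]
    rw [Finset.sum_eq_single i0]
    · simp [hk0]
    · intro i _ hne
      simp [Finsupp.single_apply, (Ne.symm hne)]
    · simp
  have hthird : ∑ i : Fin n, ((Finsupp.single i0 1 : Fin n →₀ ℕ) i : K) *
      ∑ l ∈ Finset.range ((b i).natDegree + 1), (b i).coeff l *
        lam a b k i0 ((Finsupp.single i0 1 : Fin n →₀ ℕ) - Finsupp.single i 1) (j + l) = 0 := by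
    refine Finset.sum_eq_zero fun i _ => ?_
    by_cases hi : i = i0
    · have hz : ∀ l ∈ Finset.range ((b i).natDegree + 1),
          (b i).coeff l * lam a b k i0
            ((Finsupp.single i0 1 : Fin n →₀ ℕ) - Finsupp.single i 1) (j + l) = 0 := by
        intro l _
        rw [hi, tsub_self, lam_vanish (by simp), mul_zero]
      rw [Finset.sum_eq_zero hz, mul_zero]
    · rw [Finsupp.single_apply, if_neg (Ne.symm hi)]
      simp
  rw [hsW, hthird, add_zero, Nat.cast_one, one_mul] at h
  exact h

lemma lam_not_eventually [CharZero K] (he : a.natDegree ≠ 0) (hk0 : (i0 : ℕ) < k) (N : ℕ) :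
    ¬ ∀ m : ℕ, N ≤ m → lam a b k i0 (Finsupp.single i0 1) m = 0 := by
  intro hvan
  have H : ∀ d m : ℕ, N ≤ m + d → lam a b k i0 (Finsupp.single i0 1) m = 0 := by
    intro d
    induction d with
    | zero => intro m h; exact hvan m (by omega)
    | succ d ih =>
      intro m h
      by_cases hNm : N ≤ m
      · exact hvan m hNm
      · have hrec := lam_e1_rec (a := a) (b := b) he hk0 (m + 1)
        have hall : ∀ l ∈ Finset.range (a.natDegree + 1),
            a.coeff l * lam a b k i0 (Finsupp.single i0 1) (m + 1 + l) = 0 := by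
          intro l _
          rw [ih (m + 1 + l) (by omega), mul_zero]
        rw [Finset.sum_eq_zero hall, add_zero, Nat.add_sub_cancel] at hrec
        have hc : ((m + 1 : ℕ) : K) ≠ 0 := Nat.cast_ne_zero.mpr (Nat.succ_ne_zero m)
        push_cast at hrec hc
        exact (mul_eq_zero.mp hrec).resolve_left hc
  have h0 := H N 0 (by omega)
  rw [lam_init he] at h0
  exact one_ne_zero h0

lemma partB [CharZero K] (hk1 : 1 ≤ k) (hkn : k ≤ n)
    (hDx : D (X none) = 1)
    (hDy : ∀ i : Fin n, D (X (some i)) = dval k a b (some i))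
    (he : a.natDegree ≠ 0) :
    ¬ IsMathieuZhao K (LinearMap.range D.toLinearMap) := by
  intro hMZ
  have hn : 0 < n := lt_of_lt_of_le hk1 hkn
  set i0 : Fin n := ⟨0, hn⟩ with hi0
  have hk0 : (i0 : ℕ) < k := by rw [hi0]; exact hk1
  have hpow : ∀ m : ℕ, 1 ≤ m →
      (X none : MvPolynomial (Option (Fin n)) K) ^ m ∈ LinearMap.range D.toLinearMap := by
    intro m _
    refine ⟨((m : K) + 1)⁻¹ • X none ^ (m + 1), ?_⟩
    have hD : D (X none ^ (m + 1)) = ((m : K) + 1) • X none ^ m := by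
      rw [Derivation.leibniz_pow, hDx, Nat.add_sub_cancel, smul_eq_mul, mul_one,
        ← Nat.cast_smul_eq_nsmul K, Nat.cast_add, Nat.cast_one]
    show D (((m : K) + 1)⁻¹ • X none ^ (m + 1)) = X none ^ m
    rw [Derivation.map_smul, hD, smul_smul,
      inv_mul_cancel₀ (Nat.cast_add_one_ne_zero m), one_smul]
  obtain ⟨N, hN⟩ := hMZ (X none) (X (some i0)) hpow
  refine lam_not_eventually (a := a) (b := b) (k := k) (i0 := i0) he hk0 N ?_
  intro m hm
  obtain ⟨p, hp⟩ := hN m hm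
  have h1 : LamF a b k i0 (X (some i0) * X none ^ m) =
      lam a b k i0 (Finsupp.single i0 1) m := by
    have h2 : (X (some i0) : MvPolynomial (Option (Fin n)) K) * X none ^ m =
        monomial (Finsupp.single (some i0) 1 + Finsupp.single none m) 1 := by
      rw [X_pow_eq_monomial, X, monomial_mul, one_mul]
    rw [h2, LamF_monomial, mul_one, mu]
    congr 1
    · ext i'
      simp [Finsupp.single_apply]
    · simp
  have h3 : D p = X (some i0) * X none ^ m := hp
  rw [← h1, ← h3]
  exact LamF_D he hk0 hDx hDy p

end MZ3

end

/-- For `D = ∂ₓ + Σ_{i=1}^{k} (a(x) yᵢ + bᵢ(x)) ∂ᵢ + Σ_{j=k+1}^{n} bⱼ(x) ∂ⱼ`,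
`Im D` is a Mathieu–Zhao space of `K[x, y₁, …, yₙ]` iff `a(x)` is a constant. -/
theorem statement3 (K : Type*) [Field K] [CharZero K]
    (n k : ℕ) (hk1 : 1 ≤ k) (hkn : k ≤ n)
    (a : Polynomial K) (b : Fin n → Polynomial K)
    (D : Derivation K (MvPolynomial (Option (Fin n)) K) (MvPolynomial (Option (Fin n)) K))
    (hDx : D (X none) = 1)
    (hDy : ∀ i : Fin n, D (X (some i)) =
      if (i : ℕ) < k then
        Polynomial.aeval (X none) a * X (some i) + Polynomial.aeval (X none) (b i)
      else Polynomial.aeval (X none) (b i)) :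
    IsMathieuZhao K (LinearMap.range D.toLinearMap) ↔ ∃ c : K, a = Polynomial.C c := by
  have hDy' : ∀ i : Fin n, D (X (some i)) = MZ3.dval k a b (some i) := fun i => hDy i
  constructor
  · intro hMZ
    by_contra hnc
    have he : a.natDegree ≠ 0 := by
      intro h
      obtain ⟨c, hc⟩ := Polynomial.natDegree_eq_zero.mp h
      exact hnc ⟨c, hc.symm⟩
    exact MZ3.partB hk1 hkn hDx hDy' he hMZ
  · rintro ⟨c, hc⟩
    exact MZ3.partA hDx hDy' c hc
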